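/- Let δ, γ ∈ (−1, +∞) and let h : [0,∞) → ℝ be continuous with 0 ≤ h(x) ≤ 1 for all x ≥ 0. Let f(w) := exp(−2w) and w̄(w) := ∫₀ʷ z(1 + γ h(z))/(1 + δ h(z)) dz. Then for every x ≥ 0, ∫₀ˣ f(w̄(w)) dw ≤ √π·max(1,1+δ)^{1/2} / (2·min(1,1+γ)^{1/2}). -/

import Mathlib

open Real Filter Set

theorem integral_exp_estimate (δ γ : ℝ) (hδ : -1 < δ) (hγ : -1 < γ)
    (h : ℝ → ℝ) (hcont : ContinuousOn h (Set.Ici 0))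
    (hb : ∀ x ≥ (0:ℝ), 0 ≤ h x ∧ h x ≤ 1) :
    ∀ x ≥ (0:ℝ),
      (∫ w in (0:ℝ)..x,
        Real.exp (-(2 * ∫ z in (0:ℝ)..w, z*(1+γ*h z)/(1+δ*h z)))) ≤
      Real.sqrt π * (max 1 (1+δ)) ^ ((1:ℝ)/2) / (2 * (min 1 (1+γ)) ^ ((1:ℝ)/2)) := by
  intro x hx
  set m : ℝ := min 1 (1+γ) with hm
  set M : ℝ := max 1 (1+δ) with hM
  have hm0 : 0 < m := lt_min one_pos (by linarith)
  have hM0 : 0 < M := lt_of_lt_of_le one_pos (le_max_left _ _)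
  set c : ℝ := m / M with hc
  have hc0 : 0 < c := div_pos hm0 hM0
  set g : ℝ → ℝ := fun z => z*(1+γ*h z)/(1+δ*h z) with hg
  -- pointwise bounds on g
  have hden : ∀ z ≥ (0:ℝ), 0 < 1 + δ * h z := by
    intro z hz
    obtain ⟨h0, h1⟩ := hb z hz
    nlinarith [mul_nonneg (sub_nonneg.2 h1) (le_of_lt (show (0:ℝ) < 1 by norm_num)),
      mul_nonneg h0 (le_of_lt (show (0:ℝ) < δ + 1 by linarith))]
  have hgb : ∀ z ≥ (0:ℝ), c * z ≤ g z := by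
    intro z hz
    obtain ⟨h0, h1⟩ := hb z hz
    have hd := hden z hz
    have hnum : m ≤ 1 + γ * h z := by
      have e1 : (1 - h z) * (1 - m) ≥ 0 :=
        mul_nonneg (by linarith) (by simp [hm])
      have e2 : h z * (1 + γ - m) ≥ 0 :=
        mul_nonneg h0 (by simp [hm])
      nlinarith
    have hden2 : 1 + δ * h z ≤ M := by
      have e1 : (1 - h z) * (M - 1) ≥ 0 :=
        mul_nonneg (by linarith) (by simp [hM])
      have e2 : h z * (M - (1 + δ)) ≥ 0 :=
        mul_nonneg h0 (by simp [hM])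
      nlinarith
    rw [hg, hc]
    rw [le_div_iff₀ hd, div_mul_eq_mul_div, div_mul_eq_mul_div, div_le_iff₀ hM0]
    nlinarith [mul_nonneg (mul_nonneg hm0.le hz) (sub_nonneg.2 hden2),
      mul_nonneg (mul_nonneg hM0.le hz) (sub_nonneg.2 hnum)]
  -- continuity and integrability
  have hgcont : ContinuousOn g (Set.Ici 0) := by
    apply ContinuousOn.div
    · exact continuousOn_id.mul (continuousOn_const.add (continuousOn_const.mul hcont))
    · exact continuousOn_const.add (continuousOn_const.mul hcont)
    · intro z hz; exact ne_of_gt (hden z hz)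
  have hgint : ∀ w ≥ (0:ℝ), IntervalIntegrable g MeasureTheory.volume 0 w := by
    intro w hw
    apply ContinuousOn.intervalIntegrable
    apply hgcont.mono
    rw [Set.uIcc_of_le hw]
    exact fun z hz => hz.1
  -- lower bound on the inner integral
  have hbar : ∀ w ≥ (0:ℝ), c * w ^ 2 / 2 ≤ ∫ z in (0:ℝ)..w, g z := by
    intro w hw
    have h1 : (∫ z in (0:ℝ)..w, c * z) ≤ ∫ z in (0:ℝ)..w, g z := by
      apply intervalIntegral.integral_mono_on hw
      · exact (continuous_const.mul continuous_id).intervalIntegrable _ _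
      · exact hgint w hw
      · intro z hz; exact hgb z hz.1
    have h2 : (∫ z in (0:ℝ)..w, c * z) = c * w ^ 2 / 2 := by
      rw [intervalIntegral.integral_const_mul, integral_id]
      ring
    linarith
  -- pointwise bound on the outer integrand
  have hpt : ∀ w ∈ Set.Icc (0:ℝ) x,
      Real.exp (-(2 * ∫ z in (0:ℝ)..w, g z)) ≤ Real.exp (-c * w ^ 2) := by
    intro w hw
    apply Real.exp_le_exp.2
    have := hbar w hw.1
    nlinarith
  -- integrability of both outer integrands
  have hcont1 : ContinuousOn (fun w => Real.exp (-(2 * ∫ z in (0:ℝ)..w, g z)))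
      (Set.Icc 0 x) := by
    apply Real.continuous_exp.comp_continuousOn
    apply ContinuousOn.neg
    apply continuousOn_const.mul
    have : Set.uIcc (0:ℝ) x = Set.Icc 0 x := Set.uIcc_of_le hx
    have := intervalIntegral.continuousOn_primitive_interval
      (f := g) (μ := MeasureTheory.volume) (a := 0) (b := x) ?_
    · rwa [Set.uIcc_of_le hx] at this
    · rw [Set.uIcc_of_le hx]
      exact (hgcont.mono (fun z hz => hz.1)).integrableOn_compact isCompact_Icc
  have hint1 : IntervalIntegrable (fun w => Real.exp (-(2 * ∫ z in (0:ℝ)..w, g z)))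
      MeasureTheory.volume 0 x := by
    apply ContinuousOn.intervalIntegrable
    rwa [Set.uIcc_of_le hx]
  have hint2 : IntervalIntegrable (fun w => Real.exp (-c * w ^ 2))
      MeasureTheory.volume 0 x :=
    (Real.continuous_exp.comp ((continuous_const).mul (continuous_pow 2))).intervalIntegrable _ _
  -- comparison with the Gaussian
  have step1 : (∫ w in (0:ℝ)..x, Real.exp (-(2 * ∫ z in (0:ℝ)..w, g z))) ≤
      ∫ w in (0:ℝ)..x, Real.exp (-c * w ^ 2) :=
    intervalIntegral.integral_mono_on hx hint1 hint2 hpt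
  have step2 : (∫ w in (0:ℝ)..x, Real.exp (-c * w ^ 2)) ≤
      ∫ w in Set.Ioi (0:ℝ), Real.exp (-c * w ^ 2) := by
    rw [intervalIntegral.integral_of_le hx]
    apply MeasureTheory.setIntegral_mono_set
    · exact (integrable_exp_neg_mul_sq hc0).integrableOn
    · filter_upwards with w using (Real.exp_pos _).le
    · exact HasSubset.Subset.eventuallyLE Set.Ioc_subset_Ioi_self
  have step3 : (∫ w in Set.Ioi (0:ℝ), Real.exp (-c * w ^ 2)) = Real.sqrt (π / c) / 2 :=
    integral_gaussian_Ioi c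
  -- final algebra
  have hrhs : Real.sqrt (π / c) / 2 =
      Real.sqrt π * M ^ ((1:ℝ)/2) / (2 * m ^ ((1:ℝ)/2)) := by
    rw [← Real.sqrt_eq_rpow, ← Real.sqrt_eq_rpow]
    have hpc : π / c = π * M / m := by rw [hc]; field_simp
    rw [hpc, Real.sqrt_div (by positivity) m, Real.sqrt_mul Real.pi_pos.le]
    have hsm : 0 < Real.sqrt m := Real.sqrt_pos.2 hm0
    field_simp
  rw [← hrhs]
  linarith
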